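/- Let n, m be positive integers, α₀ > 0, σ > 0, ν ≥ α₀σ², and set κ = √(2ν/(α₀σ²)) and γ = 1/(2κ²). Let A ∈ ℝ^{n×n}, B ∈ ℝ^{n×m}, K ∈ ℝ^{m×n}, and let Q ∈ ℝ^{n×n}, R ∈ ℝ^{m×m} be symmetric with Q ⪰ α₀ I_n and R ⪰ α₀ I_m. Let μ > 0 and let V be a symmetric positive definite (n+m)×(n+m) matrix with V ⪰ (4νμ/(α₀σ²)) I_{n+m}. Suppose P is an n×n symmetric positive semidefinite matrix with trace norm ‖P‖_* ≤ ν/σ² satisfying P ⪰ Q + Kᵀ R K + (A + BK)ᵀ P (A + BK) − 2 μ ‖P‖_* Eᵀ V⁻¹ E, where E ∈ ℝ^{(n+m)×n} is the matrix obtained by stacking I_n on top of K. Then: (i) P ⪰ (α₀/2) I_n + (α₀/2) Kᵀ K + (A + BK)ᵀ P (A + BK); (ii) (α₀/2) I_n ⪯ P ⪯ (ν/σ²) I_n, so P is positive definite; (iii) ‖K‖ ≤ κ; and (iv) ‖P^{1/2} (A + BK) P^{−1/2}‖ ≤ √(1 − κ⁻²) ≤ 1 − γ. -/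

import Mathlib

open Matrix

/-- The operator (spectral) norm of a real matrix: the norm of the induced linear map
between Euclidean spaces, `‖A‖ = max_{‖x‖ ≤ 1} ‖A x‖`. -/
noncomputable def opNorm {m n : Type*} [Fintype m] [Fintype n] [DecidableEq n]
    (A : Matrix m n ℝ) : ℝ :=
  ‖LinearMap.toContinuousLinearMap (Matrix.toEuclideanLin A)‖

/-- The positive semidefinite square root of a positive semidefinite matrix (the definition
`Matrix.PosSemidef.sqrt` of the older Mathlib, which has since been removed). -/
noncomputable def Matrix.PosSemidef.sqrt {n : Type*} [Fintype n] [DecidableEq n]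
    {A : Matrix n n ℝ} (hA : A.PosSemidef) : Matrix n n ℝ :=
  hA.1.eigenvectorUnitary.1 * diagonal ((↑) ∘ (√·) ∘ hA.1.eigenvalues) *
  (star hA.1.eigenvectorUnitary : Matrix n n ℝ)

theorem Matrix.PosSemidef.sqrt_mul_self {n : Type*} [Fintype n] [DecidableEq n]
    {A : Matrix n n ℝ} (hA : A.PosSemidef) : hA.sqrt * hA.sqrt = A := by
  conv_rhs => rw [hA.1.spectral_theorem, Unitary.conjStarAlgAut_apply]
  simp only [Matrix.PosSemidef.sqrt]
  rw [show ∀ X Y Z W : Matrix n n ℝ, X * Y * Z * (X * W * Z) = X * (Y * (Z * X) * W) * Z from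
    fun _ _ _ _ => by simp only [Matrix.mul_assoc]]
  rw [Unitary.coe_star_mul_self, Matrix.mul_one, diagonal_mul_diagonal]
  congr 2
  congr 1
  funext i
  simp [Real.mul_self_sqrt (hA.eigenvalues_nonneg i)]

theorem Matrix.PosSemidef.posSemidef_sqrt {n : Type*} [Fintype n] [DecidableEq n]
    {A : Matrix n n ℝ} (hA : A.PosSemidef) : hA.sqrt.PosSemidef := by
  have h := (PosSemidef.diagonal (d := (↑) ∘ (√·) ∘ hA.1.eigenvalues)
    (fun i => Real.sqrt_nonneg _)).conjTranspose_mul_mul_same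
      (star (hA.1.eigenvectorUnitary : Matrix n n ℝ))
  rwa [← Matrix.star_eq_conjTranspose, star_star] at h

namespace Stmt10Aux

open Matrix

variable {ι : Type*} [Fintype ι]

lemma psd_qf {M : Matrix ι ι ℝ} (hM : M.PosSemidef) (x : ι → ℝ) :
    0 ≤ x ⬝ᵥ (M *ᵥ x) := by simpa using hM.dotProduct_mulVec_nonneg x

lemma psd_of {M : Matrix ι ι ℝ} (hH : M.IsHermitian)
    (h : ∀ x : ι → ℝ, 0 ≤ x ⬝ᵥ (M *ᵥ x)) : M.PosSemidef :=
  PosSemidef.of_dotProduct_mulVec_nonneg hH (by simpa using h)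

lemma qf_sub (M N : Matrix ι ι ℝ) (x : ι → ℝ) :
    x ⬝ᵥ ((M - N) *ᵥ x) = x ⬝ᵥ (M *ᵥ x) - x ⬝ᵥ (N *ᵥ x) := by
  rw [sub_mulVec, dotProduct_sub]

lemma qf_add (M N : Matrix ι ι ℝ) (x : ι → ℝ) :
    x ⬝ᵥ ((M + N) *ᵥ x) = x ⬝ᵥ (M *ᵥ x) + x ⬝ᵥ (N *ᵥ x) := by
  rw [add_mulVec, dotProduct_add]

lemma qf_smul (a : ℝ) (M : Matrix ι ι ℝ) (x : ι → ℝ) :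
    x ⬝ᵥ ((a • M) *ᵥ x) = a * (x ⬝ᵥ (M *ᵥ x)) := by
  rw [smul_mulVec, dotProduct_smul, smul_eq_mul]

lemma qf_one [DecidableEq ι] (x : ι → ℝ) :
    x ⬝ᵥ ((1 : Matrix ι ι ℝ) *ᵥ x) = x ⬝ᵥ x := by rw [one_mulVec]

lemma dp_self_nonneg (x : ι → ℝ) : 0 ≤ x ⬝ᵥ x :=
  Finset.sum_nonneg fun i _ => mul_self_nonneg _

lemma dp_self_pos {x : ι → ℝ} (hx : x ≠ 0) : 0 < x ⬝ᵥ x := by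
  obtain ⟨i, hi⟩ := Function.ne_iff.mp hx
  exact Finset.sum_pos' (fun j _ => mul_self_nonneg _)
    ⟨i, Finset.mem_univ i, mul_self_pos.mpr hi⟩

lemma conj_qf {a b : Type*} [Fintype a] [Fintype b] (A : Matrix a b ℝ)
    (M : Matrix a a ℝ) (z w : b → ℝ) :
    z ⬝ᵥ ((Aᵀ * M * A) *ᵥ w) = (A *ᵥ z) ⬝ᵥ (M *ᵥ (A *ᵥ w)) := by
  rw [← mulVec_mulVec, ← mulVec_mulVec, dotProduct_mulVec z, vecMul_transpose]

lemma qf_transpose_mul_self {a b : Type*} [Fintype a] [Fintype b]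
    (A : Matrix a b ℝ) (x : b → ℝ) :
    x ⬝ᵥ ((Aᵀ * A) *ᵥ x) = (A *ᵥ x) ⬝ᵥ (A *ᵥ x) := by
  rw [← mulVec_mulVec, dotProduct_mulVec, vecMul_transpose]

lemma trans_eq_of_herm {M : Matrix ι ι ℝ} (hM : M.IsHermitian) : Mᵀ = M := by
  have h := hM.eq
  rwa [conjTranspose_eq_transpose_of_trivial] at h

lemma psd_conj {a b : Type*} [Fintype a] [Fintype b] {M : Matrix a a ℝ}
    (hM : M.PosSemidef) (A : Matrix a b ℝ) : (Aᵀ * M * A).PosSemidef := by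
  have h := hM.conjTranspose_mul_mul_same A
  rwa [conjTranspose_eq_transpose_of_trivial] at h

lemma psd_smul {M : Matrix ι ι ℝ} (hM : M.PosSemidef) {a : ℝ} (ha : 0 ≤ a) :
    (a • M).PosSemidef := by
  refine psd_of ?_ fun x => ?_
  · rw [IsHermitian, conjTranspose_smul]
    simp [trans_eq_of_herm hM.1]
  · rw [qf_smul]; exact mul_nonneg ha (psd_qf hM x)

lemma qf_le_trace [DecidableEq ι] {M : Matrix ι ι ℝ} (hM : M.PosSemidef) (x : ι → ℝ) :
    x ⬝ᵥ (M *ᵥ x) ≤ M.trace * (x ⬝ᵥ x) := by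
  obtain ⟨C, hC⟩ : ∃ C : Matrix ι ι ℝ, M = Cᴴ * C :=
    ⟨hM.sqrt, by rw [hM.posSemidef_sqrt.1.eq, hM.sqrt_mul_self]⟩
  rw [conjTranspose_eq_transpose_of_trivial] at hC
  subst hC
  rw [qf_transpose_mul_self]
  have hlhs : (C *ᵥ x) ⬝ᵥ (C *ᵥ x) = ∑ i, (∑ j, C i j * x j) ^ 2 := by
    simp [dotProduct, mulVec, sq]
  have htr : (Cᵀ * C).trace = ∑ i, ∑ j, C i j ^ 2 := by
    rw [Matrix.trace]
    simp only [Matrix.diag, Matrix.mul_apply, Matrix.transpose_apply, sq]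
    exact Finset.sum_comm
  have hx : x ⬝ᵥ x = ∑ j, x j ^ 2 := by simp [dotProduct, sq]
  rw [hlhs, htr, hx, Finset.sum_mul]
  refine Finset.sum_le_sum fun i _ => ?_
  exact Finset.sum_mul_sq_le_sq_mul_sq _ _ _

lemma trace_nonneg [DecidableEq ι] {M : Matrix ι ι ℝ} (hM : M.PosSemidef) :
    0 ≤ M.trace := by
  obtain ⟨C, hC⟩ : ∃ C : Matrix ι ι ℝ, M = Cᴴ * C :=
    ⟨hM.sqrt, by rw [hM.posSemidef_sqrt.1.eq, hM.sqrt_mul_self]⟩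
  rw [conjTranspose_eq_transpose_of_trivial] at hC
  subst hC
  rw [Matrix.trace]
  refine Finset.sum_nonneg fun i _ => ?_
  simp only [Matrix.diag, Matrix.mul_apply, Matrix.transpose_apply]
  exact Finset.sum_nonneg fun j _ => mul_self_nonneg _

lemma opNorm_le_of_qf {a b : Type*} [Fintype a] [Fintype b] [DecidableEq b]
    (A : Matrix a b ℝ) {c : ℝ} (hc : 0 ≤ c)
    (h : ∀ x : b → ℝ, (A *ᵥ x) ⬝ᵥ (A *ᵥ x) ≤ c ^ 2 * (x ⬝ᵥ x)) :
    opNorm A ≤ c := by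
  refine ContinuousLinearMap.opNorm_le_bound _ hc fun x => ?_
  set u : b → ℝ := (WithLp.equiv 2 (b → ℝ)) x with hu
  have hfx : ‖(LinearMap.toContinuousLinearMap (toEuclideanLin A)) x‖
      = Real.sqrt ((A *ᵥ u) ⬝ᵥ (A *ᵥ u)) := by
    rw [EuclideanSpace.norm_eq]
    congr 1
    simp only [LinearMap.coe_toContinuousLinearMap', toEuclideanLin_apply, dotProduct]
    refine Finset.sum_congr rfl fun i _ => ?_
    rw [Real.norm_eq_abs, sq_abs, sq]
    rfl
  have hnx : ‖x‖ = Real.sqrt (u ⬝ᵥ u) := by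
    rw [EuclideanSpace.norm_eq]
    congr 1
    refine Finset.sum_congr rfl fun i _ => ?_
    rw [Real.norm_eq_abs, sq_abs, sq]
    rfl
  rw [hfx, hnx]
  calc Real.sqrt ((A *ᵥ u) ⬝ᵥ (A *ᵥ u)) ≤ Real.sqrt (c ^ 2 * (u ⬝ᵥ u)) :=
        Real.sqrt_le_sqrt (h u)
    _ = c * Real.sqrt (u ⬝ᵥ u) := by
        rw [Real.sqrt_mul (sq_nonneg c), Real.sqrt_sq hc]

lemma sqrt_one_sub_le {t : ℝ} (h0 : 0 ≤ t) (h1 : t ≤ 1) :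
    Real.sqrt (1 - t) ≤ 1 - t / 2 := by
  have h2 : 1 - t ≤ (1 - t / 2) ^ 2 := by nlinarith
  have h3 : (0:ℝ) ≤ 1 - t / 2 := by linarith
  calc Real.sqrt (1 - t) ≤ Real.sqrt ((1 - t / 2) ^ 2) := Real.sqrt_le_sqrt h2
    _ = 1 - t / 2 := Real.sqrt_sq h3

end Stmt10Aux

open Stmt10Aux

theorem stmt10 (n m : ℕ) (hn : 0 < n) (hm : 0 < m)
    (α₀ σ ν : ℝ) (hα₀ : 0 < α₀) (hσ : 0 < σ) (hν : α₀ * σ ^ 2 ≤ ν)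
    (κ γ : ℝ) (hκ : κ = Real.sqrt (2 * ν / (α₀ * σ ^ 2))) (hγ : γ = 1 / (2 * κ ^ 2))
    (A : Matrix (Fin n) (Fin n) ℝ) (B : Matrix (Fin n) (Fin m) ℝ)
    (K : Matrix (Fin m) (Fin n) ℝ)
    (Q : Matrix (Fin n) (Fin n) ℝ) (R : Matrix (Fin m) (Fin m) ℝ)
    (hQsym : Q.IsHermitian) (hRsym : R.IsHermitian)
    (hQ : (Q - α₀ • (1 : Matrix (Fin n) (Fin n) ℝ)).PosSemidef)
    (hR : (R - α₀ • (1 : Matrix (Fin m) (Fin m) ℝ)).PosSemidef)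
    (μ : ℝ) (hμ : 0 < μ)
    (V : Matrix (Fin n ⊕ Fin m) (Fin n ⊕ Fin m) ℝ) (hV : V.PosDef)
    (hVlb : (V - (4 * ν * μ / (α₀ * σ ^ 2)) •
        (1 : Matrix (Fin n ⊕ Fin m) (Fin n ⊕ Fin m) ℝ)).PosSemidef)
    (P : Matrix (Fin n) (Fin n) ℝ) (hP : P.PosSemidef)
    (hPtr : P.trace ≤ ν / σ ^ 2)
    (hRic : (P - (Q + Kᵀ * R * K + (A + B * K)ᵀ * P * (A + B * K)
        - (2 * μ * P.trace) •
          ((Matrix.fromRows (1 : Matrix (Fin n) (Fin n) ℝ) K)ᵀ * V⁻¹ *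
            Matrix.fromRows (1 : Matrix (Fin n) (Fin n) ℝ) K))).PosSemidef) :
    (P - ((α₀ / 2) • (1 : Matrix (Fin n) (Fin n) ℝ) + (α₀ / 2) • (Kᵀ * K)
        + (A + B * K)ᵀ * P * (A + B * K))).PosSemidef ∧
    (P - (α₀ / 2) • (1 : Matrix (Fin n) (Fin n) ℝ)).PosSemidef ∧
    ((ν / σ ^ 2) • (1 : Matrix (Fin n) (Fin n) ℝ) - P).PosSemidef ∧
    P.PosDef ∧
    opNorm K ≤ κ ∧
    opNorm (hP.sqrt * (A + B * K) * hP.sqrt⁻¹) ≤ Real.sqrt (1 - 1 / κ ^ 2) ∧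
    Real.sqrt (1 - 1 / κ ^ 2) ≤ 1 - γ := by
  have hσ2 : (0:ℝ) < σ ^ 2 := by positivity
  have hν0 : (0:ℝ) < ν := lt_of_lt_of_le (by positivity) hν
  have hκ2 : κ ^ 2 = 2 * ν / (α₀ * σ ^ 2) := by
    rw [hκ, Real.sq_sqrt (by positivity)]
  have hκ2ge2 : (2:ℝ) ≤ κ ^ 2 := by
    rw [hκ2, le_div_iff₀ (by positivity)]
    linarith
  have hκpos : 0 < κ := by
    rw [hκ]
    exact Real.sqrt_pos.mpr (by positivity)
  set Mcl := A + B * K with hMcl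
  set E := Matrix.fromRows (1 : Matrix (Fin n) (Fin n) ℝ) K with hE
  set s := 2 * μ * P.trace with hs
  have htrP : 0 ≤ P.trace := trace_nonneg hP
  have hs0 : 0 ≤ s := by positivity
  have htrσ : P.trace * σ ^ 2 ≤ ν := (le_div_iff₀ hσ2).mp hPtr
  -- the matrix G := (α₀/2) • 1 - s • V⁻¹ is PSD
  have hVdet : IsUnit V.det := isUnit_iff_ne_zero.mpr hV.det_pos.ne'
  set T := hV.posSemidef.sqrt with hT
  have hTpsd := hV.posSemidef.posSemidef_sqrt
  have hTT : T * T = V := hV.posSemidef.sqrt_mul_self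
  have hTdet : IsUnit T.det := by
    have h2 : T.det * T.det = V.det := by rw [← det_mul, hTT]
    exact isUnit_iff_ne_zero.mpr fun h0 => (isUnit_iff_ne_zero.mp hVdet)
      (by rw [← h2, h0, zero_mul])
  have hTinv : T * T⁻¹ = 1 := mul_nonsing_inv T hTdet
  have hTinv' : T⁻¹ * T = 1 := nonsing_inv_mul T hTdet
  have hVinv : V⁻¹ = T⁻¹ * T⁻¹ := by rw [← hTT, Matrix.mul_inv_rev]
  have hTsymm : Tᵀ = T := trans_eq_of_herm hTpsd.1
  have hGqf : ∀ x : (Fin n ⊕ Fin m) → ℝ,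
      s * (x ⬝ᵥ (V⁻¹ *ᵥ x)) ≤ (α₀ / 2) * (x ⬝ᵥ x) := by
    intro x
    set z := T⁻¹ *ᵥ x with hz
    have hxz : x = T *ᵥ z := by rw [hz, mulVec_mulVec, hTinv, one_mulVec]
    have hTT1 : T * (T⁻¹ * T⁻¹) * T = 1 := by
      rw [Matrix.mul_assoc, Matrix.mul_assoc, hTinv', Matrix.mul_one, hTinv]
    have h1 : x ⬝ᵥ (V⁻¹ *ᵥ x) = z ⬝ᵥ z := by
      conv_lhs => rw [hxz]
      rw [← conj_qf, hTsymm, hVinv, hTT1, one_mulVec]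
    have h2 : x ⬝ᵥ x = z ⬝ᵥ (V *ᵥ z) := by
      conv_lhs => rw [hxz]
      rw [show (T *ᵥ z) ⬝ᵥ (T *ᵥ z)
            = (T *ᵥ z) ⬝ᵥ ((1 : Matrix _ _ ℝ) *ᵥ (T *ᵥ z)) by rw [one_mulVec],
        ← conj_qf, hTsymm, Matrix.mul_one, hTT]
    have hzV : (4 * ν * μ / (α₀ * σ ^ 2)) * (z ⬝ᵥ z) ≤ z ⬝ᵥ (V *ᵥ z) := by
      have h := psd_qf hVlb z
      rw [qf_sub, qf_smul, qf_one] at h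
      linarith
    have hz0 : 0 ≤ z ⬝ᵥ z := dp_self_nonneg z
    have hsν : s ≤ 2 * μ * (ν / σ ^ 2) := by
      rw [hs]
      have := mul_le_mul_of_nonneg_left hPtr (le_of_lt (by positivity : (0:ℝ) < 2 * μ))
      linarith
    have hkey : (2 * μ * (ν / σ ^ 2)) = (α₀ / 2) * (4 * ν * μ / (α₀ * σ ^ 2)) := by
      field_simp
      ring
    rw [h1, h2]
    calc s * (z ⬝ᵥ z) ≤ (2 * μ * (ν / σ ^ 2)) * (z ⬝ᵥ z) :=
          mul_le_mul_of_nonneg_right hsν hz0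
      _ = (α₀ / 2) * ((4 * ν * μ / (α₀ * σ ^ 2)) * (z ⬝ᵥ z)) := by rw [hkey]; ring
      _ ≤ (α₀ / 2) * (z ⬝ᵥ (V *ᵥ z)) :=
          mul_le_mul_of_nonneg_left hzV (by positivity)
  have hVinvH : V⁻¹.IsHermitian := hV.1.inv
  have hG : ((α₀ / 2) • (1 : Matrix (Fin n ⊕ Fin m) (Fin n ⊕ Fin m) ℝ)
      - s • V⁻¹).PosSemidef := by
    refine psd_of ?_ fun x => ?_
    · rw [IsHermitian, conjTranspose_sub, conjTranspose_smul, conjTranspose_smul,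
        conjTranspose_one, hVinvH.eq]
      simp
    · rw [qf_sub, qf_smul, qf_smul, qf_one]
      have := hGqf x
      linarith
  have hR4 : (Eᵀ * ((α₀ / 2) • (1 : Matrix (Fin n ⊕ Fin m) (Fin n ⊕ Fin m) ℝ)
      - s • V⁻¹) * E).PosSemidef := psd_conj hG E
  have hR3 : (Kᵀ * (R - α₀ • (1 : Matrix (Fin m) (Fin m) ℝ)) * K).PosSemidef :=
    psd_conj hR K
  have hMPM : (Mclᵀ * P * Mcl).PosSemidef := psd_conj hP Mcl
  have hEE : Eᵀ * E = (1 : Matrix (Fin n) (Fin n) ℝ) + Kᵀ * K := by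
    rw [hE, transpose_fromRows, fromCols_mul_fromRows, Matrix.transpose_one,
      Matrix.one_mul]
  -- (i)
  have e1 : Kᵀ * (R - α₀ • (1 : Matrix (Fin m) (Fin m) ℝ)) * K
      = Kᵀ * R * K - α₀ • (Kᵀ * K) := by
    rw [Matrix.mul_sub, Matrix.sub_mul, Matrix.mul_smul, Matrix.mul_one, Matrix.smul_mul]
  have e2 : Eᵀ * ((α₀ / 2) • (1 : Matrix (Fin n ⊕ Fin m) (Fin n ⊕ Fin m) ℝ)
        - s • V⁻¹) * E
      = (α₀ / 2) • ((1 : Matrix (Fin n) (Fin n) ℝ) + Kᵀ * K)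
        - s • (Eᵀ * V⁻¹ * E) := by
    rw [Matrix.mul_sub, Matrix.sub_mul]
    rw [Matrix.mul_smul, Matrix.mul_one, Matrix.smul_mul, hEE]
    rw [Matrix.mul_smul, Matrix.smul_mul]
  have hi : (P - ((α₀ / 2) • (1 : Matrix (Fin n) (Fin n) ℝ) + (α₀ / 2) • (Kᵀ * K)
      + Mclᵀ * P * Mcl)).PosSemidef := by
    have hsum := ((hRic.add hQ).add hR3).add hR4
    have heq : P - (Q + Kᵀ * R * K + Mclᵀ * P * Mcl - s • (Eᵀ * V⁻¹ * E))
        + (Q - α₀ • (1 : Matrix (Fin n) (Fin n) ℝ))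
        + Kᵀ * (R - α₀ • (1 : Matrix (Fin m) (Fin m) ℝ)) * K
        + Eᵀ * ((α₀ / 2) • (1 : Matrix (Fin n ⊕ Fin m) (Fin n ⊕ Fin m) ℝ)
          - s • V⁻¹) * E
        = P - ((α₀ / 2) • (1 : Matrix (Fin n) (Fin n) ℝ) + (α₀ / 2) • (Kᵀ * K)
          + Mclᵀ * P * Mcl) := by
      rw [e1, e2]
      module
    rwa [heq] at hsum
  -- (ii) lower
  have hKK : (Kᵀ * K).PosSemidef := by
    have h := Matrix.posSemidef_conjTranspose_mul_self K
    rwa [conjTranspose_eq_transpose_of_trivial] at h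
  have hii : (P - (α₀ / 2) • (1 : Matrix (Fin n) (Fin n) ℝ)).PosSemidef := by
    have hsum := (hi.add (psd_smul hKK (by positivity : (0:ℝ) ≤ α₀ / 2))).add hMPM
    have heq : P - ((α₀ / 2) • (1 : Matrix (Fin n) (Fin n) ℝ) + (α₀ / 2) • (Kᵀ * K)
          + Mclᵀ * P * Mcl) + (α₀ / 2) • (Kᵀ * K) + Mclᵀ * P * Mcl
        = P - (α₀ / 2) • (1 : Matrix (Fin n) (Fin n) ℝ) := by
      module
    rwa [heq] at hsum
  -- (ii) upper
  have hPub : ∀ x : Fin n → ℝ, x ⬝ᵥ (P *ᵥ x) ≤ (ν / σ ^ 2) * (x ⬝ᵥ x) := by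
    intro x
    calc x ⬝ᵥ (P *ᵥ x) ≤ P.trace * (x ⬝ᵥ x) := qf_le_trace hP x
      _ ≤ (ν / σ ^ 2) * (x ⬝ᵥ x) :=
          mul_le_mul_of_nonneg_right hPtr (dp_self_nonneg x)
  have hiii : ((ν / σ ^ 2) • (1 : Matrix (Fin n) (Fin n) ℝ) - P).PosSemidef := by
    refine psd_of ?_ fun x => ?_
    · rw [IsHermitian, conjTranspose_sub, conjTranspose_smul, conjTranspose_one, hP.1.eq]
      simp
    · rw [qf_sub, qf_smul, qf_one]
      have := hPub x
      linarith
  -- P is PosDef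
  have hPlb : ∀ x : Fin n → ℝ, (α₀ / 2) * (x ⬝ᵥ x) ≤ x ⬝ᵥ (P *ᵥ x) := by
    intro x
    have h := psd_qf hii x
    rw [qf_sub, qf_smul, qf_one] at h
    linarith
  have hPdef : P.PosDef := by
    refine PosDef.of_dotProduct_mulVec_pos hP.1 fun x hx => ?_
    have h1 : 0 < (α₀ / 2) * (x ⬝ᵥ x) := by
      have := dp_self_pos hx
      positivity
    have h2 := hPlb x
    simpa using lt_of_lt_of_le h1 h2
  -- quadratic form consequence of (i)
  have hiqf : ∀ y : Fin n → ℝ,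
      (Mcl *ᵥ y) ⬝ᵥ (P *ᵥ (Mcl *ᵥ y))
        ≤ y ⬝ᵥ (P *ᵥ y) - (α₀ / 2) * (y ⬝ᵥ y)
          - (α₀ / 2) * ((K *ᵥ y) ⬝ᵥ (K *ᵥ y)) := by
    intro y
    have h := psd_qf hi y
    rw [qf_sub, qf_add, qf_add, qf_smul, qf_smul, qf_one] at h
    rw [conj_qf] at h
    rw [show y ⬝ᵥ ((Kᵀ * K) *ᵥ y) = (K *ᵥ y) ⬝ᵥ (K *ᵥ y) from
      qf_transpose_mul_self K y] at h
    linarith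
  -- (iii)
  have hKnorm : opNorm K ≤ κ := by
    refine opNorm_le_of_qf K (le_of_lt hκpos) fun x => ?_
    have h1 := hiqf x
    have h2 := hPub x
    have h3 := psd_qf hP (Mcl *ᵥ x)
    have hxq : 0 ≤ x ⬝ᵥ x := dp_self_nonneg x
    have hxq2 : 0 ≤ (α₀ / 2) * (x ⬝ᵥ x) := by positivity
    have h4 : (α₀ / 2) * ((K *ᵥ x) ⬝ᵥ (K *ᵥ x)) ≤ (ν / σ ^ 2) * (x ⬝ᵥ x) := by
      linarith
    rw [hκ2, div_mul_eq_mul_div, le_div_iff₀ (by positivity : (0:ℝ) < α₀ * σ ^ 2)]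
    have h5 := mul_le_mul_of_nonneg_left h4 (le_of_lt (by positivity : (0:ℝ) < 2 * σ ^ 2))
    have h6 : 2 * σ ^ 2 * ((ν / σ ^ 2) * (x ⬝ᵥ x)) = 2 * ν * (x ⬝ᵥ x) := by
      field_simp
    nlinarith
  -- (iv)
  have hSS : hP.sqrt * hP.sqrt = P := hP.sqrt_mul_self
  have hSpsd := hP.posSemidef_sqrt
  have hSsymm : hP.sqrtᵀ = hP.sqrt := trans_eq_of_herm hSpsd.1
  have hSdet : IsUnit hP.sqrt.det := by
    have h2 : hP.sqrt.det * hP.sqrt.det = P.det := by rw [← det_mul, hSS]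
    exact isUnit_iff_ne_zero.mpr fun h0 => hPdef.det_pos.ne' (by rw [← h2, h0, zero_mul])
  have hSinv : hP.sqrt * hP.sqrt⁻¹ = 1 := mul_nonsing_inv _ hSdet
  have hone : (0:ℝ) ≤ 1 - 1 / κ ^ 2 := by
    have h1 : 1 / κ ^ 2 ≤ 1 / 2 := by
      apply one_div_le_one_div_of_le
      · norm_num
      · exact hκ2ge2
    linarith
  have hinvκ : 1 / κ ^ 2 = α₀ * σ ^ 2 / (2 * ν) := by
    rw [hκ2, one_div_div]
  have hLnorm : opNorm (hP.sqrt * Mcl * hP.sqrt⁻¹) ≤ Real.sqrt (1 - 1 / κ ^ 2) := by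
    refine opNorm_le_of_qf _ (Real.sqrt_nonneg _) fun x => ?_
    rw [Real.sq_sqrt hone]
    set y := hP.sqrt⁻¹ *ᵥ x with hy
    have hxy : hP.sqrt *ᵥ y = x := by rw [hy, mulVec_mulVec, hSinv, one_mulVec]
    have hLx : (hP.sqrt * Mcl * hP.sqrt⁻¹) *ᵥ x = hP.sqrt *ᵥ (Mcl *ᵥ y) := by
      rw [← mulVec_mulVec, ← mulVec_mulVec, ← hy]
    have hq1 : ((hP.sqrt * Mcl * hP.sqrt⁻¹) *ᵥ x) ⬝ᵥ ((hP.sqrt * Mcl * hP.sqrt⁻¹) *ᵥ x)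
        = (Mcl *ᵥ y) ⬝ᵥ (P *ᵥ (Mcl *ᵥ y)) := by
      rw [hLx]
      have h := qf_transpose_mul_self hP.sqrt (Mcl *ᵥ y)
      rw [hSsymm, hSS] at h
      rw [← h]
    have hq2 : y ⬝ᵥ (P *ᵥ y) = x ⬝ᵥ x := by
      have := qf_transpose_mul_self hP.sqrt y
      rw [hSsymm, hSS] at this
      rw [this, hxy]
    have hyq : 0 ≤ y ⬝ᵥ y := dp_self_nonneg y
    have hxq : 0 ≤ x ⬝ᵥ x := dp_self_nonneg x
    have h1 := hiqf y
    have h2 := hPub y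
    -- from h2 and hq2 : x ⬝ᵥ x ≤ (ν/σ²) (y ⬝ᵥ y)
    have h3 : (σ ^ 2 / ν) * (x ⬝ᵥ x) ≤ y ⬝ᵥ y := by
      rw [← hq2]
      rw [div_mul_eq_mul_div, div_le_iff₀ hν0]
      calc σ ^ 2 * (y ⬝ᵥ (P *ᵥ y)) ≤ σ ^ 2 * ((ν / σ ^ 2) * (y ⬝ᵥ y)) :=
            mul_le_mul_of_nonneg_left h2 (le_of_lt hσ2)
        _ = y ⬝ᵥ y * ν := by field_simp
    have h4 : 0 ≤ (α₀ / 2) * ((K *ᵥ y) ⬝ᵥ (K *ᵥ y)) := by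
      have := dp_self_nonneg (K *ᵥ y)
      positivity
    have h5 : (α₀ / 2) * ((σ ^ 2 / ν) * (x ⬝ᵥ x)) ≤ (α₀ / 2) * (y ⬝ᵥ y) :=
      mul_le_mul_of_nonneg_left h3 (by positivity)
    have h6 : (1 - 1 / κ ^ 2) * (x ⬝ᵥ x)
        = x ⬝ᵥ x - (α₀ / 2) * ((σ ^ 2 / ν) * (x ⬝ᵥ x)) := by
      rw [hinvκ]
      field_simp
    rw [hq1, h6]
    linarith [hq2 ▸ h1]
  -- scalar inequality
  have hlast : Real.sqrt (1 - 1 / κ ^ 2) ≤ 1 - γ := by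
    have hκ2pos : (0:ℝ) < κ ^ 2 := by positivity
    have ht1 : 1 / κ ^ 2 ≤ 1 / 2 := by
      apply one_div_le_one_div_of_le
      · norm_num
      · exact hκ2ge2
    have ht0 : 0 < 1 / κ ^ 2 := by positivity
    have h3 : γ = 1 / κ ^ 2 / 2 := by rw [hγ]; ring
    have h4 := sqrt_one_sub_le (le_of_lt ht0) (by linarith : 1 / κ ^ 2 ≤ 1)
    rw [h3]
    linarith
  exact ⟨hi, hii, hiii, hPdef, hKnorm, hLnorm, hlast⟩
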